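/- arXiv:1910.10348 — 2 statements merged into one kernel-verified Lean document; each statement's English description precedes it below -/
import Mathlib

section
/- In the unidirectional maintenance scheduling problem, any job of maximal length is a splitting job: if P ⊆ 𝒫 and j ∈ J(P) satisfies p'_j ≥ p'_{j'} for all j' ∈ J(P), then for every X ∈ ℛ_j, every job in J(P∖X) lies in J_L(X,P) ∪ J_R(X,P). -/
open Finset
open scoped Classical

/-- Possession collection of job `j` in the unidirectional case: all intervals
`[ℓ_a, ℓ_{a+p'_j-1}]` with `r'_j ≤ a ≤ d'_j - p'_j + 1` (paths identified with
their integer indices). -/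
noncomputable def poss {ι : Type*} (r d p : ι → ℤ) (j : ι) : Finset (Finset ℤ) :=
  (Finset.Icc (r j) (d j - p j + 1)).image fun a => Finset.Icc a (a + p j - 1)

/-- `J(P)`: jobs each of whose possessions meets `P`. -/
noncomputable def Jset {ι : Type*} [Fintype ι]
    (ℛ : ι → Finset (Finset ℤ)) (P : Finset ℤ) : Finset ι :=
  Finset.univ.filter fun j => ∀ S ∈ ℛ j, (S ∩ P).Nonempty

/-- `R(X,P)`: paths of `P` to the right of all paths of `X`. -/
noncomputable def Rpart (X P : Finset ℤ) : Finset ℤ := P.filter fun i => ∀ x ∈ X, x < i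

/-- `L(X,P)`: paths of `P` to the left of all paths of `X`. -/
noncomputable def Lpart (X P : Finset ℤ) : Finset ℤ := P.filter fun i => ∀ x ∈ X, i < x

/-- `J_R(X,P)`. -/
noncomputable def JRight {ι : Type*} [Fintype ι]
    (ℛ : ι → Finset (Finset ℤ)) (X P : Finset ℤ) : Finset ι :=
  (Jset ℛ (P \ X)).filter fun j => ∀ Y ∈ ℛ j, (Y ∩ P) \ X ⊆ Rpart X P

/-- `J_L(X,P)`. -/
noncomputable def JLeft {ι : Type*} [Fintype ι]
    (ℛ : ι → Finset (Finset ℤ)) (X P : Finset ℤ) : Finset ι :=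
  (Jset ℛ (P \ X)).filter fun j => ∀ Y ∈ ℛ j, (Y ∩ P) \ X ⊆ Lpart X P

/-- Lemma 4 (`lem:splitting_job`): in the unidirectional problem, a job `j ∈ J(P)` of
maximal length is splitting: for every `X ∈ ℛ j`, every job of `J(P \ X)` lies in
`J_L(X,P) ∪ J_R(X,P)`. -/
theorem max_length_job_is_splitting {ι : Type*} [Fintype ι]
    (r d p : ι → ℤ) (hp : ∀ j, 1 ≤ p j) (hfeas : ∀ j, r j + p j - 1 ≤ d j)
    (P : Finset ℤ) (j : ι) (hj : j ∈ Jset (poss r d p) P)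
    (hmax : ∀ j' ∈ Jset (poss r d p) P, p j' ≤ p j) :
    ∀ X ∈ poss r d p j, ∀ j'' ∈ Jset (poss r d p) (P \ X),
      j'' ∈ JLeft (poss r d p) X P ∪ JRight (poss r d p) X P := by
  intro X hX j'' hj''
  obtain ⟨a, ha, rfl⟩ := Finset.mem_image.mp hX
  rw [Finset.mem_Icc] at ha
  have hj''P : j'' ∈ Jset (poss r d p) P := by
    rw [Jset, Finset.mem_filter] at hj'' ⊢
    refine ⟨Finset.mem_univ _, fun S hS => ?_⟩
    obtain ⟨y, hy⟩ := hj''.2 S hS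
    rw [Finset.mem_inter, Finset.mem_sdiff] at hy
    exact ⟨y, Finset.mem_inter.mpr ⟨hy.1, hy.2.1⟩⟩
  have hple : p j'' ≤ p j := hmax _ hj''P
  by_contra hnot
  rw [Finset.mem_union] at hnot
  push_neg at hnot
  obtain ⟨hL, hR⟩ := hnot
  rw [JLeft, Finset.mem_filter] at hL
  rw [JRight, Finset.mem_filter] at hR
  push_neg at hL hR
  obtain ⟨Y1, hY1, hns1⟩ := hL hj''
  obtain ⟨Y2, hY2, hns2⟩ := hR hj''
  rw [Finset.not_subset] at hns1 hns2
  obtain ⟨y1, hy1, hy1L⟩ := hns1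
  obtain ⟨y2, hy2, hy2R⟩ := hns2
  rw [Finset.mem_sdiff, Finset.mem_inter] at hy1 hy2
  obtain ⟨a1, ha1, rfl⟩ := Finset.mem_image.mp hY1
  obtain ⟨a2, ha2, rfl⟩ := Finset.mem_image.mp hY2
  rw [Finset.mem_Icc] at ha1 ha2
  have h1 : ¬ ∀ x ∈ Finset.Icc a (a + p j - 1), y1 < x := by
    intro h; exact hy1L (Finset.mem_filter.mpr ⟨hy1.1.2, h⟩)
  push_neg at h1
  obtain ⟨x1, hx1, hx1'⟩ := h1
  have h2 : ¬ ∀ x ∈ Finset.Icc a (a + p j - 1), x < y2 := by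
    intro h; exact hy2R (Finset.mem_filter.mpr ⟨hy2.1.2, h⟩)
  push_neg at h2
  obtain ⟨x2, hx2, hx2'⟩ := h2
  rw [Finset.mem_Icc] at hx1 hx2
  have hy1X : y1 ∉ Finset.Icc a (a + p j - 1) := hy1.2
  have hy2X : y2 ∉ Finset.Icc a (a + p j - 1) := hy2.2
  rw [Finset.mem_Icc, not_and, not_le] at hy1X hy2X
  have hy1m := Finset.mem_Icc.mp hy1.1.1
  have hy2m := Finset.mem_Icc.mp hy2.1.1
  have hp'' := hp j''
  have hmem' : Finset.Icc (a + p j - p j'') (a + p j - p j'' + p j'' - 1) ∈ poss r d p j'' := by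
    rw [poss, Finset.mem_image]
    exact ⟨a + p j - p j'', Finset.mem_Icc.mpr ⟨by omega, by omega⟩, rfl⟩
  rw [Jset, Finset.mem_filter] at hj''
  obtain ⟨y, hy⟩ := hj''.2 _ hmem'
  rw [Finset.mem_inter, Finset.mem_sdiff, Finset.mem_Icc, Finset.mem_Icc, not_and, not_le] at hy
  omega
end

section
/- For every s ∈ {2,…,t} and every job j with f(s−1) < j ≤ f(s), the span (i_s, k_s) covers job j, i.e., |[i_s,k_s] ∩ [r'_j,d'_j]| ≥ p_j. -/
open Finset
open scoped Classical

/-- Job `j` is covered by the span `[a,b]`: `|[a,b] ∩ [r'_j,d'_j]| ≥ p_j`. -/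
def covers (r d p : ℕ → ℤ) (a b : ℤ) (j : ℕ) : Prop :=
  p j ≤ ((Finset.Icc a b ∩ Finset.Icc (r j) (d j)).card : ℤ)

/-- Feasibility of a set of spans: every job `1, …, n` is covered by some span. -/
def FeasibleSpans (n : ℕ) (r d p : ℕ → ℤ) (S : Finset (ℤ × ℤ)) : Prop :=
  ∀ j ∈ Finset.Icc 1 n, ∃ q ∈ S, covers r d p q.1 q.2 j

/-- Cost of a set of spans: total number of paths they contain. -/
def spanCost (S : Finset (ℤ × ℤ)) : ℤ := ∑ q ∈ S, (q.2 - q.1 + 1)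

/-- `f(s)`: the largest job index `j` such that all jobs up to `j` can be covered by the
first `s` spans (0 if there is none). -/
noncomputable def fFun (n : ℕ) (r d p : ℕ → ℤ) (i k : ℕ → ℤ) (s : ℕ) : ℕ :=
  WithBot.unbotD 0 (((Finset.Icc 1 n).filter fun j => ∀ j' ∈ Finset.Icc 1 j,
      ∃ s' ∈ Finset.Icc 1 s, covers r d p (i s') (k s') j').max)


lemma card_inter_Icc (a b c e : ℤ) :
    (((Finset.Icc a b ∩ Finset.Icc c e).card : ℤ)) = max (min b e + 1 - max a c) 0 := by
  have h : Finset.Icc a b ∩ Finset.Icc c e = Finset.Icc (max a c) (min b e) := by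
    ext x
    simp only [Finset.mem_inter, Finset.mem_Icc]
    omega
  rw [h, Int.card_Icc]
  omega

lemma covers_iff (r d p : ℕ → ℤ) (a b : ℤ) (j : ℕ) (h : 1 ≤ p j) :
    covers r d p a b j ↔ p j ≤ min b (d j) + 1 - max a (r j) := by
  unfold covers
  rw [card_inter_Icc]
  omega

lemma mem_filter'' {α : Type*} (p : α → Prop) (inst : DecidablePred p) (s : Finset α) (a : α) :
    a ∈ @Finset.filter α p inst s ↔ a ∈ s ∧ p a := by
  rw [Finset.filter_congr_decidable]
  exact Finset.mem_filter

lemma max_unbot'_mem (F : Finset ℕ) (h : 1 ≤ WithBot.unbotD 0 F.max) : WithBot.unbotD 0 F.max ∈ F := by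
  have hne : F.Nonempty := by
    by_contra he
    rw [Finset.not_nonempty_iff_eq_empty] at he
    subst he
    simp at h
  obtain ⟨m, hm⟩ := Finset.max_of_nonempty hne
  rw [hm]
  simpa using Finset.mem_of_max hm

lemma le_max_unbot' (F : Finset ℕ) (j : ℕ) (hj : j ∈ F) : j ≤ WithBot.unbotD 0 F.max := by
  obtain ⟨m, hm⟩ := Finset.max_of_nonempty ⟨j, hj⟩
  have h := Finset.le_max hj
  rw [hm] at h ⊢
  simpa using h

/-- Lemma (`lem:interval_partition`): for every `s ∈ {2,…,t}` and every job `j` with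
`f(s-1) < j ≤ f(s)`, the span `(i_s, k_s)` covers job `j`. -/
theorem interval_partition (n t : ℕ) (r d p : ℕ → ℤ)
    (hp : ∀ j, 1 ≤ j → j ≤ n → 1 ≤ p j)
    (hfeas : ∀ j, 1 ≤ j → j ≤ n → r j + p j - 1 ≤ d j)
    (hr : ∀ j j', 1 ≤ j → j ≤ j' → j' ≤ n → r j ≤ r j')
    (hd : ∀ j j', 1 ≤ j → j ≤ j' → j' ≤ n → d j ≤ d j')
    (hn : 1 ≤ n) (ht : 1 ≤ t)
    (i k : ℕ → ℤ) (S : Finset (ℤ × ℤ))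
    (hS : S = (Finset.Icc 1 t).image fun s => (i s, k s))
    (hcard : S.card = t)
    (hik : ∀ s, 1 ≤ s → s ≤ t → i s ≤ k s)
    (hsep : ∀ s, 1 ≤ s → s < t → k s + 2 ≤ i (s + 1))
    (hfeasS : FeasibleSpans n r d p S)
    (hopt : ∀ S' : Finset (ℤ × ℤ), FeasibleSpans n r d p S' → spanCost S ≤ spanCost S')
    (hminsupp : ∀ S' : Finset (ℤ × ℤ), FeasibleSpans n r d p S' →
      spanCost S' = spanCost S → S.card ≤ S'.card) :
    ∀ s, 2 ≤ s → s ≤ t → ∀ j, fFun n r d p i k (s - 1) < j → j ≤ fFun n r d p i k s →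
      covers r d p (i s) (k s) j := by
  have hfe : ∀ s'' : ℕ, fFun n r d p i k s'' =
      WithBot.unbotD 0 (((Finset.Icc 1 n).filter fun jj => ∀ j' ∈ Finset.Icc 1 jj,
        ∃ s' ∈ Finset.Icc 1 s'', covers r d p (i s') (k s') j').max) := by
    intro s''
    unfold fFun
    rw [Finset.filter_congr_decidable]
  intro s hs2 hst j hj1 hj2
  rw [hfe] at hj1 hj2
  have chain : ∀ b a : ℕ, 1 ≤ a → a < b → b ≤ t → k a + 2 ≤ i b := by
    intro b
    induction b with
    | zero => omega
    | succ m ih =>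
      intro a ha hab hbt
      rcases Nat.lt_succ_iff_lt_or_eq.mp hab with h | h
      · have h1 := ih a ha h (by omega)
        have h2 := hsep m (by omega) (by omega)
        have h3 := hik m (by omega) (by omega)
        omega
      · subst h
        exact hsep a ha (by omega)
  have hj1' : 1 ≤ j := by omega
  have hfs1 : 1 ≤ WithBot.unbotD 0 (((Finset.Icc 1 n).filter fun jj => ∀ j' ∈ Finset.Icc 1 jj,
      ∃ s' ∈ Finset.Icc 1 s, covers r d p (i s') (k s') j').max) :=
    le_trans hj1' hj2
  have hmem := max_unbot'_mem _ hfs1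
  rw [mem_filter''] at hmem
  obtain ⟨hmemIcc, hcov⟩ := hmem
  have hfsn := (Finset.mem_Icc.mp hmemIcc).2
  have hjn : j ≤ n := le_trans hj2 hfsn
  obtain ⟨s', hs'mem, hcovj⟩ := hcov j (Finset.mem_Icc.mpr ⟨hj1', hj2⟩)
  rw [Finset.mem_Icc] at hs'mem
  have hj0 : ∃ j₀, 1 ≤ j₀ ∧ j₀ ≤ j ∧
      ¬ ∃ s'' ∈ Finset.Icc 1 (s-1), covers r d p (i s'') (k s'') j₀ := by
    by_contra hc
    push_neg at hc
    have hjF : j ∈ (Finset.Icc 1 n).filter fun jj => ∀ j' ∈ Finset.Icc 1 jj,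
        ∃ s'' ∈ Finset.Icc 1 (s-1), covers r d p (i s'') (k s'') j' := by
      rw [mem_filter'']
      refine ⟨Finset.mem_Icc.mpr ⟨hj1', hjn⟩, fun j' hj' => ?_⟩
      have hj'2 := Finset.mem_Icc.mp hj'
      obtain ⟨q, hq1, hq2⟩ := hc j' hj'2.1 hj'2.2
      exact ⟨q, hq1, hq2⟩
    have hle := le_max_unbot' _ j hjF
    omega
  obtain ⟨j₀, hj01, hj0j, hj0nc⟩ := hj0
  obtain ⟨s₀, hs₀mem, hcovj0⟩ := hcov j₀ (Finset.mem_Icc.mpr ⟨hj01, le_trans hj0j hj2⟩)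
  rw [Finset.mem_Icc] at hs₀mem
  have hs₀ : s₀ = s := by
    by_contra h
    exact hj0nc ⟨s₀, Finset.mem_Icc.mpr ⟨hs₀mem.1, by omega⟩, hcovj0⟩
  subst hs₀
  rcases eq_or_lt_of_le hs'mem.2 with h | h
  · rwa [h] at hcovj
  · have hj0n : j₀ ≤ n := le_trans hj0j hjn
    have hpj : 1 ≤ p j := hp j hj1' hjn
    have hpj0 : 1 ≤ p j₀ := hp j₀ hj01 hj0n
    have hrmono : r j₀ ≤ r j := hr j₀ j hj01 hj0j hjn
    have hdmono : d j₀ ≤ d j := hd j₀ j hj01 hj0j hjn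
    have hchain : k s' + 2 ≤ i s₀ := chain s₀ s' hs'mem.1 h hst
    have hnc : ¬ covers r d p (i s') (k s') j₀ := fun hcc =>
      hj0nc ⟨s', Finset.mem_Icc.mpr ⟨hs'mem.1, by omega⟩, hcc⟩
    rw [covers_iff _ _ _ _ _ _ hpj] at hcovj ⊢
    rw [covers_iff _ _ _ _ _ _ hpj0] at hcovj0 hnc
    push_neg at hnc
    omega
end
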